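/- For every integer n ≥ 1, every binary word w of length n, and every κ > 0, the set A_{κ,w} ⊆ [0,1) of κ,w-atypical points has Lebesgue measure zero. Equivalently, for Lebesgue-almost every x ∈ [0,1), the frequency a_k(x,w) of occurrences of w among the first k binary digits of x converges to 2^{−n} as k → ∞. -/

import Mathlib

open MeasureTheory

/-- Number of occurrences of the word `w` (of length `n`) in the word `v` (of length `N`). -/
noncomputable def occCount (N n : ℕ) (v : Fin N → Bool) (w : Fin n → Bool) : ℕ :=
  Nat.card {i : ℕ // i + n ≤ N ∧ ∀ (j : Fin n) (h : i + (j : ℕ) < N), v ⟨i + (j : ℕ), h⟩ = w j}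

/-- The `i`-th binary digit of `x ∈ [0,1)`: `ω_i(x) = ⌊2^(i+1) x⌋ mod 2`. -/
noncomputable def binDigit (i : ℕ) (x : ℝ) : Bool :=
  decide (⌊(2 : ℝ) ^ (i + 1) * x⌋ % 2 = 1)

/-- `a_k(x, w)`: the frequency of occurrences of `w` among the first `k` binary digits of `x`. -/
noncomputable def freq (n k : ℕ) (w : Fin n → Bool) (x : ℝ) : ℝ :=
  (occCount k n (fun i : Fin k => binDigit (i : ℕ) x) w : ℝ) / k

/-- A point `x` is `κ,w`-atypical if the sequence `(a_k(x,w))_k` has a limit (accumulation)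
point outside the interval `[2⁻ⁿ - κ, 2⁻ⁿ + κ]`. -/
def IsAtypicalPt (n : ℕ) (κ : ℝ) (w : Fin n → Bool) (x : ℝ) : Prop :=
  ∃ c : ℝ, c ∉ Set.Icc ((1 / 2 : ℝ) ^ n - κ) ((1 / 2 : ℝ) ^ n + κ) ∧
    MapClusterPt c Filter.atTop (fun k : ℕ => freq n k w x)

open Set ProbabilityTheory Filter

section BorelNormal

lemma measurable_binDigit (i : ℕ) : Measurable (binDigit i) := by
  have h1 : Measurable fun x : ℝ => ⌊(2:ℝ) ^ (i+1) * x⌋ :=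
    Int.measurable_floor.comp (measurable_const_mul _)
  exact (measurable_from_top (f := fun z : ℤ => decide (z % 2 = 1))).comp h1

lemma binDigit_succ (i : ℕ) (c : Bool) (y : ℝ) :
    binDigit (i + 1) ((y + (if c then 1 else 0)) / 2) = binDigit i y := by
  unfold binDigit
  congr 1
  have : (2:ℝ) ^ (i + 1 + 1) * ((y + (if c then 1 else 0)) / 2)
      = 2 ^ (i+1) * y + 2 ^ (i+1) * (if c then 1 else 0) := by ring
  rw [this]
  cases c <;> simp
  · have : (2:ℝ)^(i+1) = ((2^(i+1) : ℤ) : ℝ) := by push_cast; ring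
    rw [this, Int.floor_add_intCast]
    have h2 : (2:ℤ)^(i+1) = 2 * 2^i := by ring
    rw [h2, Int.add_mul_emod_self_left]

lemma binDigit_zero (c : Bool) (y : ℝ) (hy : y ∈ Ico (0:ℝ) 1) :
    binDigit 0 ((y + (if c then 1 else 0)) / 2) = c := by
  unfold binDigit
  have : (2:ℝ) ^ (0 + 1) * ((y + (if c then 1 else 0)) / 2) = y + (if c then 1 else 0) := by ring
  rw [this]
  have h0 : ⌊y⌋ = 0 := Int.floor_eq_zero_iff.2 hy
  cases c <;> simp [Int.floor_add_intCast, h0]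

def cylSet (s : Finset ℕ) (f : ℕ → Bool) : Set ℝ :=
  {x | x ∈ Ico (0:ℝ) 1 ∧ ∀ i ∈ s, binDigit i x = f i}

lemma measurableSet_cylSet (s : Finset ℕ) (f : ℕ → Bool) : MeasurableSet (cylSet s f) := by
  have : cylSet s f = Ico (0:ℝ) 1 ∩ ⋂ i ∈ s, binDigit i ⁻¹' {f i} := by
    ext x; simp [cylSet]
  rw [this]
  exact measurableSet_Ico.inter (MeasurableSet.biInter s.countable_toSet
    fun i _ => (measurable_binDigit i) (MeasurableSet.singleton _))

lemma vol_half_image (e : ℝ) (S : Set ℝ) :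
    volume ((fun y => (y + e) / 2) '' S) = 2⁻¹ * volume S := by
  have h : (fun y : ℝ => (y + e) / 2) = fun y => AffineMap.homothety e (2⁻¹ : ℝ) y := by
    funext y; simp [AffineMap.homothety_apply]; ring
  rw [h]
  have := Measure.addHaar_image_homothety (volume : Measure ℝ) e (2⁻¹ : ℝ) S
  simpa [abs_of_nonneg, ENNReal.ofReal_inv_of_pos] using this

section rec
variable (s : Finset ℕ) (f : ℕ → Bool)

lemma cyl_half_image (c : Bool) (hc : 0 ∈ s → f 0 = c) :
    cylSet s f ∩ Ico ((if c then (1:ℝ) else 0) / 2) (((if c then (1:ℝ) else 0) + 1) / 2)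
      = (fun y => (y + (if c then (1:ℝ) else 0)) / 2) ''
          cylSet ((s.erase 0).image (· - 1)) (fun i => f (i + 1)) := by
  set e : ℝ := if c then (1:ℝ) else 0 with he
  have he01 : e = 0 ∨ e = 1 := by cases c <;> simp [he]
  ext x
  constructor
  · rintro ⟨⟨hx01, hdig⟩, hxh⟩
    refine ⟨2 * x - e, ⟨⟨?_, ?_⟩, ?_⟩, by ring⟩
    · rcases he01 with h | h <;> rw [h] at hxh ⊢ <;> simp at hxh <;> linarith [hxh.1]
    · rcases he01 with h | h <;> rw [h] at hxh ⊢ <;> simp at hxh <;> linarith [hxh.2]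
    · intro i' hi'
      simp only [Finset.mem_image, Finset.mem_erase] at hi'
      obtain ⟨i, ⟨hi0, his⟩, rfl⟩ := hi'
      obtain ⟨i'', rfl⟩ : ∃ k, i = k + 1 := ⟨i - 1, by omega⟩
      have := binDigit_succ i'' c (2 * x - e)
      have hx : (2 * x - e + (if c then (1:ℝ) else 0)) / 2 = x := by rw [← he]; ring
      rw [hx] at this
      simp only [Nat.add_sub_cancel]
      rw [← this]
      exact hdig _ his
  · rintro ⟨y, ⟨hy01, hdig⟩, rfl⟩
    have hb0 := binDigit_zero c y hy01
    refine ⟨⟨?_, ?_⟩, ?_⟩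
    · rcases he01 with h | h <;> rw [h] <;> obtain ⟨h1, h2⟩ := hy01 <;>
        constructor <;> simp <;> linarith
    · intro i his
      match i with
      | 0 => rw [hb0]; exact (hc his).symm
      | (i'' + 1) =>
        rw [binDigit_succ i'' c y]
        have : i'' ∈ (s.erase 0).image (· - 1) := by
          simp only [Finset.mem_image, Finset.mem_erase]
          exact ⟨i'' + 1, ⟨by omega, his⟩, by omega⟩
        exact hdig _ this
    · obtain ⟨h1, h2⟩ := hy01
      constructor <;> [linarith; linarith]
end rec

lemma cyl_half_empty (s : Finset ℕ) (f : ℕ → Bool) (c : Bool) (h0 : 0 ∈ s) (hc : f 0 ≠ c) :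
    cylSet s f ∩ Ico ((if c then (1:ℝ) else 0) / 2) (((if c then (1:ℝ) else 0) + 1) / 2) = ∅ := by
  set e : ℝ := if c then (1:ℝ) else 0 with he
  have he01 : e = 0 ∨ e = 1 := by cases c <;> simp [he]
  ext x
  simp only [mem_inter_iff, mem_empty_iff_false, iff_false, not_and]
  rintro ⟨hx01, hdig⟩ hxh
  have hy : 2 * x - e ∈ Ico (0:ℝ) 1 := by
    rcases he01 with h | h <;> rw [h] at hxh ⊢ <;> simp at hxh <;>
      exact ⟨by linarith [hxh.1], by linarith [hxh.2]⟩
  have hb0 := binDigit_zero c (2 * x - e) hy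
  have hx : (2 * x - e + (if c then (1:ℝ) else 0)) / 2 = x := by rw [← he]; ring
  rw [hx] at hb0
  exact hc ((hdig 0 h0).symm.trans hb0)

lemma vol_cylSet_aux (N : ℕ) :
    ∀ s : Finset ℕ, s ⊆ Finset.range N → ∀ f : ℕ → Bool,
      volume (cylSet s f) = (2⁻¹ : ENNReal) ^ s.card := by
  induction N with
  | zero =>
    intro s hs f
    have : s = ∅ := Finset.subset_empty.1 (by simpa using hs)
    subst this
    have : cylSet ∅ f = Ico (0:ℝ) 1 := by ext x; simp [cylSet]
    rw [this]
    simp [Real.volume_Ico]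
  | succ N ih =>
    intro s hs f
    set s₁ := (s.erase 0).image (· - 1) with hs₁
    have hs₁sub : s₁ ⊆ Finset.range N := by
      intro i' hi'
      simp only [hs₁, Finset.mem_image, Finset.mem_erase] at hi'
      obtain ⟨i, ⟨hi0, his⟩, rfl⟩ := hi'
      have := Finset.mem_range.1 (hs his)
      exact Finset.mem_range.2 (by omega)
    have hvol₁ := ih s₁ hs₁sub (fun i => f (i + 1))
    have volA : ∀ S : Set ℝ, volume ((fun a : ℝ => a / 2) '' S) = 2⁻¹ * volume S := by
      intro S
      have := vol_half_image 0 S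
      simpa using this
    have volB : ∀ S : Set ℝ, volume ((fun a : ℝ => (a + 1) / 2) '' S) = 2⁻¹ * volume S :=
      fun S => vol_half_image 1 S
    -- split the cylinder into two halves
    have hsplit : volume (cylSet s f)
        = volume (cylSet s f ∩ Ico (0:ℝ) (1/2)) + volume (cylSet s f ∩ Ico (1/2 : ℝ) 1) := by
      rw [← measure_union]
      · congr 1
        ext x
        simp only [mem_union, mem_inter_iff, mem_Ico]
        constructor
        · intro hx
          rcases lt_or_ge x (1/2 : ℝ) with h | h
          · exact Or.inl ⟨hx, hx.1.1, h⟩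
          · exact Or.inr ⟨hx, h, hx.1.2⟩
        · rintro (⟨hx, _⟩ | ⟨hx, _⟩) <;> exact hx
      · exact Set.disjoint_left.2 (by rintro x ⟨_, _, h1⟩ ⟨_, h2, _⟩; exact absurd h2 (not_le.2 h1))
      · exact (measurableSet_cylSet s f).inter measurableSet_Ico
    have himF := cyl_half_image s f false
    have himT := cyl_half_image s f true
    simp only [if_false, if_true, Bool.false_eq_true] at himF himT
    norm_num at himF himT
    -- note : Ico (0/2) ((0+1)/2) = Ico 0 2⁻¹  etc handled by norm_num
    by_cases h0 : 0 ∈ s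
    · have hcard : s.card = s₁.card + 1 := by
        have h1 : (s.erase 0).card = s.card - 1 := Finset.card_erase_of_mem h0
        have h2 : s₁.card = (s.erase 0).card := Finset.card_image_of_injOn (by
          intro a ha b hb hab
          simp only [Finset.mem_coe, Finset.mem_erase] at ha hb
          simp only [] at hab
          omega)
        have := Finset.card_pos.2 ⟨0, h0⟩
        omega
      cases hf : f 0 with
      | false =>
        have hE := cyl_half_empty s f true h0 (by simp [hf])
        simp only [if_true] at hE
        norm_num at hE
        rw [hsplit, himF (fun _ => hf), hE, measure_empty, add_zero, volA, hvol₁,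
          hcard, pow_succ]
        ring
      | true =>
        have hE := cyl_half_empty s f false h0 (by simp [hf])
        simp only [if_false, Bool.false_eq_true] at hE
        norm_num at hE
        rw [hsplit, hE, measure_empty, zero_add, himT (fun _ => hf), volB, hvol₁,
          hcard, pow_succ]
        ring
    · have hcard : s₁.card = s.card := by
        rw [hs₁, Finset.erase_eq_of_notMem h0]
        exact Finset.card_image_of_injOn (by
          intro a ha b hb hab
          simp only [Finset.mem_coe] at ha hb
          have ha0 : a ≠ 0 := fun h => h0 (h ▸ ha)
          have hb0 : b ≠ 0 := fun h => h0 (h ▸ hb)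
          simp only [] at hab
          omega)
      rw [hsplit, himF (fun h => absurd h h0), himT (fun h => absurd h h0),
        volA, volB, hvol₁, hcard, ← two_mul, ← mul_assoc,
        ENNReal.mul_inv_cancel (by norm_num) (by norm_num), one_mul]

section IndepHelpers
variable {Ω : Type*} [MeasurableSpace Ω] {μ : Measure Ω} [IsProbabilityMeasure μ]

lemma indep_compl_right {A B : Set Ω} (hB : MeasurableSet B)
    (h : μ (A ∩ B) = μ A * μ B) : μ (A ∩ Bᶜ) = μ A * μ Bᶜ := by
  have hd : μ (A ∩ B) + μ (A \ B) = μ A := measure_inter_add_diff A hB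
  rw [diff_eq] at hd
  have hfin : μ A * μ B ≠ ⊤ := (ENNReal.mul_lt_top
    (measure_lt_top μ A) (measure_lt_top μ B)).ne
  have : μ (A ∩ Bᶜ) = μ A - μ A * μ B := by
    rw [← h]
    exact ENNReal.eq_sub_of_add_eq (h ▸ hfin) (by rw [add_comm]; exact hd)
  rw [this, prob_compl_eq_one_sub hB, ENNReal.mul_sub (fun _ _ => measure_ne_top μ A), mul_one]

lemma indepFun_indicator_pair {A B : Set Ω} (hA : MeasurableSet A) (hB : MeasurableSet B)
    (h : μ (A ∩ B) = μ A * μ B) :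
    IndepFun (A.indicator fun _ => (1:ℝ)) (B.indicator fun _ => (1:ℝ)) μ := by
  have h2 : μ (A ∩ Bᶜ) = μ A * μ Bᶜ := indep_compl_right hB h
  have h3 : μ (Aᶜ ∩ B) = μ Aᶜ * μ B := by
    rw [inter_comm, mul_comm]
    exact indep_compl_right hA (by rw [inter_comm, mul_comm]; exact h)
  have h4 : μ (Aᶜ ∩ Bᶜ) = μ Aᶜ * μ Bᶜ := indep_compl_right hB h3
  classical
  rw [indepFun_iff_measure_inter_preimage_eq_mul]
  intro s t _ _
  rw [Set.indicator_const_preimage_eq_union A s (1:ℝ),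
    Set.indicator_const_preimage_eq_union B t (1:ℝ)]
  split_ifs <;>
    simp [Set.union_compl_self, Set.inter_union_distrib_left, Set.union_inter_distrib_right,
      h, h2, h3, h4, Set.inter_univ, Set.univ_inter, measure_univ]

lemma identDistrib_indicator_pair {A B : Set Ω} (hA : MeasurableSet A) (hB : MeasurableSet B)
    (h : μ A = μ B) :
    IdentDistrib (A.indicator fun _ => (1:ℝ)) (B.indicator fun _ => (1:ℝ)) μ μ := by
  classical
  have hmA : Measurable (A.indicator fun _ => (1:ℝ)) := measurable_const.indicator hA
  have hmB : Measurable (B.indicator fun _ => (1:ℝ)) := measurable_const.indicator hB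
  refine ⟨hmA.aemeasurable, hmB.aemeasurable, ?_⟩
  ext s hs
  rw [Measure.map_apply hmA hs, Measure.map_apply hmB hs,
    Set.indicator_const_preimage_eq_union A s (1:ℝ),
    Set.indicator_const_preimage_eq_union B s (1:ℝ)]
  split_ifs <;>
    simp [Set.union_compl_self, prob_compl_eq_one_sub, hA, hB, h,
      measure_union_add_inter, Set.union_empty]

end IndepHelpers

lemma vol_cylSet (s : Finset ℕ) (f : ℕ → Bool) :
    volume (cylSet s f) = (2⁻¹ : ENNReal) ^ s.card := by
  rcases s.bddAbove.exists_ge 0 with ⟨N, -, hN⟩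
  exact vol_cylSet_aux (N + 1) s
    (fun i hi => Finset.mem_range.2 (Nat.lt_succ_of_le (hN i hi))) f

section Block
variable (n : ℕ) (w : Fin n → Bool)

def blockSet (i : ℕ) : Set ℝ := {x : ℝ | ∀ j : Fin n, binDigit (i + (j : ℕ)) x = w j}

lemma measurableSet_blockSet (i : ℕ) : MeasurableSet (blockSet n w i) := by
  have : blockSet n w i = ⋂ j : Fin n, binDigit (i + (j : ℕ)) ⁻¹' {w j} := by
    ext x; simp [blockSet]
  rw [this]
  exact MeasurableSet.iInter fun j => (measurable_binDigit _) (MeasurableSet.singleton _)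

/-- index set of a block -/
def sBlk (i : ℕ) : Finset ℕ := (Finset.range n).image (i + ·)

lemma card_sBlk (i : ℕ) : (sBlk n i).card = n := by
  rw [sBlk, Finset.card_image_of_injective _ (add_right_injective i), Finset.card_range]

lemma mem_sBlk {i t : ℕ} : t ∈ sBlk n i ↔ ∃ a < n, t = i + a := by
  simp only [sBlk, Finset.mem_image, Finset.mem_range]
  constructor
  · rintro ⟨a, ha, rfl⟩; exact ⟨a, ha, rfl⟩
  · rintro ⟨a, ha, rfl⟩; exact ⟨a, ha, rfl⟩

def fBlk (i : ℕ) : ℕ → Bool := fun t => if h : t - i < n ∧ i ≤ t then w ⟨t - i, h.1⟩ else false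

lemma blockSet_inter_Ico (i : ℕ) :
    blockSet n w i ∩ Ico (0:ℝ) 1 = cylSet (sBlk n i) (fBlk n w i) := by
  ext x
  simp only [blockSet, cylSet, mem_inter_iff, mem_setOf_eq]
  constructor
  · rintro ⟨hdig, hx⟩
    refine ⟨hx, fun t ht => ?_⟩
    obtain ⟨a, ha, rfl⟩ := (mem_sBlk n).1 ht
    have : fBlk n w i (i + a) = w ⟨a, ha⟩ := by
      rw [fBlk]
      have h1 : i + a - i = a := by omega
      rw [dif_pos ⟨by omega, by omega⟩]
      congr 1
      exact Fin.ext (by simp [h1])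
    rw [this]
    exact hdig ⟨a, ha⟩
  · rintro ⟨hx, hdig⟩
    refine ⟨fun j => ?_, hx⟩
    have ht : i + (j : ℕ) ∈ sBlk n i := (mem_sBlk n).2 ⟨j, j.2, rfl⟩
    have := hdig _ ht
    rw [fBlk, dif_pos ⟨by omega, by omega⟩] at this
    rw [this]
    congr 1
    exact Fin.ext (by simp)

end Block

noncomputable def μ01 : Measure ℝ := volume.restrict (Ico (0:ℝ) 1)

instance : IsProbabilityMeasure μ01 :=
  ⟨by rw [μ01, Measure.restrict_apply_univ, Real.volume_Ico]; norm_num⟩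

lemma mu_blockSet (n : ℕ) (w : Fin n → Bool) (i : ℕ) :
    μ01 (blockSet n w i) = (2⁻¹ : ENNReal) ^ n := by
  rw [μ01, Measure.restrict_apply (measurableSet_blockSet n w i), blockSet_inter_Ico,
    vol_cylSet, card_sBlk]

/-- pattern for a pair of disjoint blocks -/
def fPair (n : ℕ) (w : Fin n → Bool) (i j : ℕ) : ℕ → Bool := fun t =>
  if h : t - i < n ∧ i ≤ t then w ⟨t - i, h.1⟩
  else if h' : t - j < n ∧ j ≤ t then w ⟨t - j, h'.1⟩ else false

lemma blockSet_pair_inter_Ico (n : ℕ) (w : Fin n → Bool) {i j : ℕ} (hij : i + n ≤ j) :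
    (blockSet n w i ∩ blockSet n w j) ∩ Ico (0:ℝ) 1
      = cylSet (sBlk n i ∪ sBlk n j) (fPair n w i j) := by
  ext x
  simp only [blockSet, cylSet, mem_inter_iff, mem_setOf_eq]
  constructor
  · rintro ⟨⟨hdi, hdj⟩, hx⟩
    refine ⟨hx, fun t ht => ?_⟩
    rcases Finset.mem_union.1 ht with h | h
    · obtain ⟨a, ha, rfl⟩ := (mem_sBlk n).1 h
      rw [fPair, dif_pos ⟨by omega, by omega⟩]
      have := hdi ⟨a, ha⟩
      rw [show i + ((⟨a, ha⟩ : Fin n) : ℕ) = i + a from rfl] at this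
      rw [this]
      congr 1
      exact Fin.ext (by simp)
    · obtain ⟨a, ha, rfl⟩ := (mem_sBlk n).1 h
      rw [fPair, dif_neg (by omega), dif_pos ⟨by omega, by omega⟩]
      have := hdj ⟨a, ha⟩
      rw [show j + ((⟨a, ha⟩ : Fin n) : ℕ) = j + a from rfl] at this
      rw [this]
      congr 1
      exact Fin.ext (by simp)
  · rintro ⟨hx, hdig⟩
    refine ⟨⟨fun a => ?_, fun a => ?_⟩, hx⟩
    · have ht : i + (a : ℕ) ∈ sBlk n i ∪ sBlk n j :=
        Finset.mem_union.2 (Or.inl ((mem_sBlk n).2 ⟨a, a.2, rfl⟩))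
      have := hdig _ ht
      rw [fPair, dif_pos ⟨by omega, by omega⟩] at this
      rw [this]
      congr 1
      exact Fin.ext (by simp)
    · have ht : j + (a : ℕ) ∈ sBlk n i ∪ sBlk n j :=
        Finset.mem_union.2 (Or.inr ((mem_sBlk n).2 ⟨a, a.2, rfl⟩))
      have := hdig _ ht
      have ha2 := a.2
      rw [fPair, dif_neg (by omega), dif_pos ⟨by omega, by omega⟩] at this
      rw [this]
      congr 1
      exact Fin.ext (by simp)

lemma mu_blockSet_pair (n : ℕ) (w : Fin n → Bool) {i j : ℕ} (hij : i + n ≤ j) :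
    μ01 (blockSet n w i ∩ blockSet n w j)
      = μ01 (blockSet n w i) * μ01 (blockSet n w j) := by
  have hcard : (sBlk n i ∪ sBlk n j).card = n + n := by
    rw [Finset.card_union_of_disjoint, card_sBlk, card_sBlk]
    rw [Finset.disjoint_left]
    intro t hti htj
    obtain ⟨a, ha, rfl⟩ := (mem_sBlk n).1 hti
    obtain ⟨b, hb, hE⟩ := (mem_sBlk n).1 htj
    omega
  rw [μ01, Measure.restrict_apply ((measurableSet_blockSet n w i).inter
      (measurableSet_blockSet n w j)), blockSet_pair_inter_Ico n w hij, vol_cylSet, hcard]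
  rw [← μ01] at *
  rw [mu_blockSet, mu_blockSet, pow_add]

section Det
variable {n : ℕ} (hn : 1 ≤ n)

/-- number of `m` with `r + m*n < K` -/
def cnt (n r K : ℕ) : ℕ := (K - r + (n - 1)) / n

lemma cnt_iff (hn : 1 ≤ n) (r K m : ℕ) : m < cnt n r K ↔ r + m * n < K := by
  have h1 : m < cnt n r K ↔ (m + 1) * n ≤ K - r + (n - 1) := by
    rw [cnt, ← Nat.succ_le_iff, Nat.le_div_iff_mul_le (by omega)]
  rw [h1]
  have hp : (m + 1) * n = m * n + n := by ring
  omega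

lemma cnt_le (hn : 1 ≤ n) (r K : ℕ) : cnt n r K ≤ K := by
  by_contra h
  push_neg at h
  have := (cnt_iff hn r K K).2
  have h2 : ¬ (r + K * n < K) := by
    have : K ≤ K * n := Nat.le_mul_of_pos_right K (by omega)
    omega
  have h3 : K < cnt n r K := h
  have := (cnt_iff hn r K K).1 (by omega)
  omega

lemma cnt_tendsto (hn : 1 ≤ n) (r : ℕ) : Tendsto (cnt n r) atTop atTop := by
  refine tendsto_atTop_atTop.2 fun b => ⟨r + b * n + 1, fun K hK => ?_⟩
  have := (cnt_iff hn r K b).2 (by omega)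
  omega

lemma filter_mod_eq_image (hn : 1 ≤ n) (r K : ℕ) (hr : r < n) :
    (Finset.range K).filter (fun i => i % n = r)
      = (Finset.range (cnt n r K)).image (fun m => r + m * n) := by
  ext i
  simp only [Finset.mem_filter, Finset.mem_image, Finset.mem_range]
  constructor
  · rintro ⟨hiK, hir⟩
    refine ⟨i / n, (cnt_iff hn r K _).2 ?_, ?_⟩ <;>
      · have h1 := Nat.mod_add_div i n
        have h2 : i / n * n = n * (i / n) := Nat.mul_comm _ _
        omega
  · rintro ⟨m, hm, rfl⟩
    have h1 := (cnt_iff hn r K m).1 hm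
    refine ⟨h1, ?_⟩
    rw [Nat.add_mul_mod_self_right, Nat.mod_eq_of_lt hr]

lemma sum_range_eq_residues (hn : 1 ≤ n) (Y : ℕ → ℝ) (K : ℕ) :
    ∑ i ∈ Finset.range K, Y i
      = ∑ r ∈ Finset.range n, ∑ m ∈ Finset.range (cnt n r K), Y (r + m * n) := by
  rw [← Finset.sum_fiberwise_of_maps_to (g := fun i => i % n)
    (fun i _ => Finset.mem_range.2 (Nat.mod_lt i (by omega))) Y]
  refine Finset.sum_congr rfl fun r hr => ?_
  rw [filter_mod_eq_image hn r K (Finset.mem_range.1 hr), Finset.sum_image]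
  intro a _ b _ hab
  simp only at hab
  have : a * n = b * n := by omega
  exact Nat.eq_of_mul_eq_mul_right (by omega) this

lemma sum_cnt (hn : 1 ≤ n) (K : ℕ) :
    ∑ r ∈ Finset.range n, (cnt n r K : ℝ) = (K : ℝ) := by
  have := sum_range_eq_residues hn (fun _ => (1:ℝ)) K
  simp only [Finset.sum_const, Finset.card_range, nsmul_eq_mul, mul_one] at this
  exact this.symm

theorem tendsto_total_avg (hn : 1 ≤ n) (Y : ℕ → ℝ) (c : ℝ)
    (h : ∀ r < n, Tendsto (fun M : ℕ => (∑ m ∈ Finset.range M, Y (r + m * n)) / M)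
      atTop (nhds c)) :
    Tendsto (fun K : ℕ => (∑ i ∈ Finset.range K, Y i) / K) atTop (nhds c) := by
  set S : ℕ → ℕ → ℝ := fun r M => ∑ m ∈ Finset.range M, Y (r + m * n) with hS
  set d : ℕ → ℕ → ℝ := fun r M => S r M - c * M with hd
  have key : ∀ r < n, Tendsto (fun K : ℕ => d r (cnt n r K) / K) atTop (nhds 0) := by
    intro r hr
    have h1 : Tendsto (fun M : ℕ => S r M / M - c) atTop (nhds 0) := by
      simpa using (h r hr).sub_const c
    have h2 : Tendsto (fun K : ℕ => S r (cnt n r K) / (cnt n r K) - c) atTop (nhds 0) :=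
      h1.comp (cnt_tendsto hn r)
    refine squeeze_zero_norm' ?_ (by simpa using h2.norm)
    · filter_upwards [eventually_ge_atTop (r + 1)] with K hK
      set M := cnt n r K with hM
      have hM1 : 1 ≤ M := by
        have := (cnt_iff hn r K 0).2 (by omega)
        omega
      have hMK : M ≤ K := cnt_le hn r K
      have hMpos : (0:ℝ) < M := by positivity
      have hKpos : (0:ℝ) < K := by
        have : (M:ℝ) ≤ K := by exact_mod_cast hMK
        linarith
      have hid : S r M / M - c = d r M / M := by
        rw [hd]
        field_simp
      rw [hid]
      simp only [Real.norm_eq_abs]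
      rw [abs_div, abs_div, Nat.abs_cast, Nat.abs_cast]
      exact div_le_div_of_nonneg_left (abs_nonneg _) hMpos (by exact_mod_cast hMK)
  have hsum0 : Tendsto (fun K : ℕ => ∑ r ∈ Finset.range n, d r (cnt n r K) / K)
      atTop (nhds 0) := by
    have := tendsto_finset_sum (Finset.range n) (fun r hr => key r (Finset.mem_range.1 hr))
    simpa using this
  have heq : ∀ᶠ K : ℕ in atTop,
      c + ∑ r ∈ Finset.range n, d r (cnt n r K) / K
        = (∑ i ∈ Finset.range K, Y i) / K := by
    filter_upwards [eventually_ge_atTop 1] with K hK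
    have hKpos : (0:ℝ) < K := by exact_mod_cast hK
    rw [sum_range_eq_residues hn Y K]
    have : ∑ r ∈ Finset.range n, S r (cnt n r K)
        = c * K + ∑ r ∈ Finset.range n, d r (cnt n r K) := by
      rw [hd]
      rw [Finset.sum_sub_distrib, ← Finset.mul_sum, sum_cnt hn]
      ring
    rw [this, add_div, ← Finset.sum_div, mul_div_assoc, div_self (ne_of_gt hKpos), mul_one,
      Finset.sum_div]
  have := Tendsto.congr' heq (by simpa using tendsto_const_nhds.add hsum0)
  exact this
end Det

lemma slln_residue (n : ℕ) (hn : 1 ≤ n) (w : Fin n → Bool) (r : ℕ) :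
    ∀ᵐ x ∂μ01, Tendsto (fun M : ℕ =>
        (∑ m ∈ Finset.range M, (blockSet n w (r + m * n)).indicator (fun _ => (1:ℝ)) x) / M)
      atTop (nhds ((1 / 2 : ℝ) ^ n)) := by
  set X : ℕ → ℝ → ℝ := fun m => (blockSet n w (r + m * n)).indicator fun _ => (1:ℝ) with hX
  have hmeas : ∀ m, MeasurableSet (blockSet n w (r + m * n)) :=
    fun m => measurableSet_blockSet n w _
  have hint : Integrable (X 0) μ01 := (integrable_const (1:ℝ)).indicator (hmeas 0)
  have hpair : ∀ m m' : ℕ, m < m' → IndepFun (X m) (X m') μ01 := by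
    intro m m' hmm'
    refine indepFun_indicator_pair (hmeas m) (hmeas m') (mu_blockSet_pair n w ?_)
    have h1 : (m + 1) * n ≤ m' * n := Nat.mul_le_mul_right n (by omega)
    have h2 : (m + 1) * n = m * n + n := by ring
    omega
  have hindep : Pairwise (Function.onFun (IndepFun · · μ01) X) := by
    intro m m' hne
    rcases lt_or_gt_of_ne hne with h | h
    · exact hpair m m' h
    · exact (hpair m' m h).symm
  have hident : ∀ m, IdentDistrib (X m) (X 0) μ01 μ01 := fun m =>
    identDistrib_indicator_pair (hmeas m) (hmeas 0)
      (by rw [mu_blockSet, mu_blockSet])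
  have h := strong_law_ae_real X hint hindep hident
  have hE : μ01[X 0] = (1 / 2 : ℝ) ^ n := by
    have h1 : μ01[X 0] = (μ01 (blockSet n w (r + 0 * n))).toReal :=
      integral_indicator_one (hmeas 0)
    rw [h1, mu_blockSet, ENNReal.toReal_pow]
    norm_num
  rw [hE] at h
  exact h

lemma occCount_eq_sum (n : ℕ) (hn : 1 ≤ n) (w : Fin n → Bool) (x : ℝ) (k : ℕ) :
    (occCount k n (fun i : Fin k => binDigit (i : ℕ) x) w : ℝ)
      = ∑ i ∈ Finset.range (k + 1 - n), (blockSet n w i).indicator (fun _ => (1:ℝ)) x := by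
  classical
  have hset : {i : ℕ | i + n ≤ k ∧ ∀ (j : Fin n) (h : i + (j : ℕ) < k),
      binDigit (i + (j : ℕ)) x = w j}
      = ↑((Finset.range (k + 1 - n)).filter (fun i => x ∈ blockSet n w i)) := by
    ext i
    simp only [mem_setOf_eq, Finset.coe_filter, Finset.mem_range, blockSet, mem_setOf_eq]
    constructor
    · rintro ⟨h1, h2⟩
      exact ⟨by omega, fun j => h2 j (by have := j.2; omega)⟩
    · rintro ⟨h1, h2⟩
      exact ⟨by omega, fun j _ => h2 j⟩
  have hcard : occCount k n (fun i : Fin k => binDigit (i : ℕ) x) w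
      = ((Finset.range (k + 1 - n)).filter (fun i => x ∈ blockSet n w i)).card := by
    rw [occCount]
    have : {i : ℕ // i + n ≤ k ∧ ∀ (j : Fin n) (h : i + (j : ℕ) < k),
        binDigit (i + (j : ℕ)) x = w j}
        = {i : ℕ // i ∈ ((Finset.range (k + 1 - n)).filter (fun i => x ∈ blockSet n w i))} := by
      congr 1
    rw [this, Nat.card_eq_finsetCard]
  rw [hcard]
  rw [← Finset.sum_boole]
  refine Finset.sum_congr rfl fun i _ => ?_
  rw [Set.indicator_apply]

lemma tendsto_freq_of_blocks (n : ℕ) (hn : 1 ≤ n) (w : Fin n → Bool) (x : ℝ)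
    (h : Tendsto (fun K : ℕ =>
        (∑ i ∈ Finset.range K, (blockSet n w i).indicator (fun _ => (1:ℝ)) x) / K)
      atTop (nhds ((1 / 2 : ℝ) ^ n))) :
    Tendsto (fun k : ℕ => freq n k w x) atTop (nhds ((1 / 2 : ℝ) ^ n)) := by
  set g : ℕ → ℝ := fun K => ∑ i ∈ Finset.range K, (blockSet n w i).indicator (fun _ => (1:ℝ)) x
    with hg
  have hKtend : Tendsto (fun k : ℕ => k + 1 - n) atTop atTop :=
    tendsto_atTop_atTop.2 fun b => ⟨b + n, fun k hk => by omega⟩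
  have T1 : Tendsto (fun k : ℕ => g (k + 1 - n) / (k + 1 - n : ℕ)) atTop
      (nhds ((1 / 2 : ℝ) ^ n)) := h.comp hKtend
  have T2 : Tendsto (fun k : ℕ => ((k + 1 - n : ℕ) : ℝ) / k) atTop (nhds 1) := by
    have ha : Tendsto (fun k : ℕ => 1 + (1 - (n:ℝ)) / k) atTop (nhds 1) := by
      have := tendsto_const_div_atTop_nhds_zero_nat (1 - (n:ℝ))
      simpa using tendsto_const_nhds.add this
    refine Tendsto.congr' ?_ ha
    filter_upwards [eventually_ge_atTop (n + 1)] with k hk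
    have hkpos : (0:ℝ) < k := by exact_mod_cast (by omega : 0 < k)
    have hcast : ((k + 1 - n : ℕ) : ℝ) = (k : ℝ) + 1 - n := by
      have : n ≤ k + 1 := by omega
      push_cast [this]
      ring
    rw [hcast]
    field_simp
    ring
  have := T1.mul T2
  rw [mul_one] at this
  refine Tendsto.congr' ?_ this
  filter_upwards [eventually_ge_atTop (n + 1)] with k hk
  have h1 : 1 ≤ k + 1 - n := by omega
  have hKpos : (0:ℝ) < ((k + 1 - n : ℕ) : ℝ) := by exact_mod_cast h1
  have hkpos : (0:ℝ) < (k:ℝ) := by exact_mod_cast (by omega : 0 < k)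
  rw [freq, occCount_eq_sum n hn w x k]
  rw [div_mul_div_comm]
  rw [mul_comm ((k + 1 - n : ℕ) : ℝ) (k : ℝ), mul_div_mul_right _ _ (ne_of_gt hKpos)]

theorem measure_atypical_eq_zero_aux (n : ℕ) (hn : 1 ≤ n) (w : Fin n → Bool) (κ : ℝ)
    (hκ : 0 < κ) :
    volume {x : ℝ | x ∈ Set.Ico (0 : ℝ) 1 ∧ IsAtypicalPt n κ w x} = 0 ∧
      ∀ᵐ x ∂(volume : Measure ℝ), x ∈ Set.Ico (0 : ℝ) 1 →
        Filter.Tendsto (fun k : ℕ => freq n k w x) Filter.atTop (nhds ((1 / 2 : ℝ) ^ n)) := by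
  have hae : ∀ᵐ x ∂μ01,
      Tendsto (fun k : ℕ => freq n k w x) atTop (nhds ((1 / 2 : ℝ) ^ n)) := by
    have hr : ∀ r : ℕ, ∀ᵐ x ∂μ01, r < n → Tendsto (fun M : ℕ =>
        (∑ m ∈ Finset.range M, (blockSet n w (r + m * n)).indicator (fun _ => (1:ℝ)) x) / M)
        atTop (nhds ((1 / 2 : ℝ) ^ n)) := by
      intro r
      by_cases h : r < n
      · exact (slln_residue n hn w r).mono fun x hx _ => hx
      · exact Filter.Eventually.of_forall fun x hr' => absurd hr' h
    have hall := ae_all_iff.2 hr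
    refine hall.mono fun x hx => ?_
    refine tendsto_freq_of_blocks n hn w x ?_
    exact tendsto_total_avg hn
      (fun i => (blockSet n w i).indicator (fun _ => (1:ℝ)) x) _ hx
  have h2 : ∀ᵐ x ∂(volume : Measure ℝ), x ∈ Set.Ico (0 : ℝ) 1 →
      Tendsto (fun k : ℕ => freq n k w x) atTop (nhds ((1 / 2 : ℝ) ^ n)) :=
    (ae_restrict_iff' measurableSet_Ico).1 hae
  refine ⟨?_, h2⟩
  refine measure_mono_null ?_ (ae_iff.1 h2)
  rintro x ⟨hI, c, hc, hcl⟩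
  simp only [mem_setOf_eq, not_forall]
  refine ⟨hI, fun ht => ?_⟩
  have hne : (Filter.map (fun k : ℕ => freq n k w x) atTop).NeBot := Filter.map_neBot
  have : c = (1 / 2 : ℝ) ^ n := by
    have h1 : nhds c ⊓ Filter.map (fun k : ℕ => freq n k w x) atTop
        ≤ nhds c ⊓ nhds ((1 / 2 : ℝ) ^ n) := inf_le_inf_left _ ht
    have hcl' : (nhds c ⊓ Filter.map (fun k : ℕ => freq n k w x) atTop).NeBot := hcl
    exact eq_of_nhds_neBot (hcl'.mono h1)
  rw [this] at hc
  exact hc ⟨by linarith, by linarith⟩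

end BorelNormal

/-- The set `A_{κ,w} ⊆ [0,1)` of `κ,w`-atypical points has Lebesgue measure zero;
equivalently, for Lebesgue-almost every `x ∈ [0,1)` the frequency `a_k(x,w)` converges
to `2⁻ⁿ` as `k → ∞`. -/
theorem measure_atypical_eq_zero (n : ℕ) (hn : 1 ≤ n) (w : Fin n → Bool) (κ : ℝ)
    (hκ : 0 < κ) :
    volume {x : ℝ | x ∈ Set.Ico (0 : ℝ) 1 ∧ IsAtypicalPt n κ w x} = 0 ∧
      ∀ᵐ x ∂(volume : Measure ℝ), x ∈ Set.Ico (0 : ℝ) 1 →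
        Filter.Tendsto (fun k : ℕ => freq n k w x) Filter.atTop (nhds ((1 / 2 : ℝ) ^ n)) := by
  exact measure_atypical_eq_zero_aux n hn w κ hκ
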